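/- For every k ≥ 0, the modified dual update satisfies ⟨λ_k, v_{k+1}⟩ ≥ (1/(2η'))·‖λ_{k+1}‖² − (1/(2η'))·‖λ_k‖² − η'·‖v_{k+1}‖², where ⟨·,·⟩ and ‖·‖ denote the Euclidean inner product and norm on ℝ^m. (Lemma B.3 of the paper, stated for an arbitrary sequence of constraint values.) -/

import Mathlib

open scoped RealInnerProductSpace

/-- Lemma B.3: the modified dual update lower-bounds the inner product
⟨λ_k, v_{k+1}⟩ in terms of Euclidean norms. -/
theorem dual_update_inner_bound (m : ℕ) (hm : 1 ≤ m) (η' : ℝ) (hη' : 0 < η')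
    (v lam : ℕ → EuclideanSpace ℝ (Fin m))
    (h0 : ∀ i, lam 0 i = max 0 (-η' * v 0 i))
    (hrec : ∀ k i, lam (k + 1) i = max (-η' * v (k + 1) i) (lam k i + η' * v (k + 1) i)) :
    ∀ k, ⟪lam k, v (k + 1)⟫ ≥
      1 / (2 * η') * ‖lam (k + 1)‖ ^ 2 - 1 / (2 * η') * ‖lam k‖ ^ 2 - η' * ‖v (k + 1)‖ ^ 2 := by
  intro k
  have hnorm : ∀ x : EuclideanSpace ℝ (Fin m), ‖x‖ ^ 2 = ∑ i, x i ^ 2 := by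
    intro x
    rw [← real_inner_self_eq_norm_sq, PiLp.inner_apply]
    simp [sq]
  have hinner : ⟪lam k, v (k + 1)⟫ = ∑ i, lam k i * v (k + 1) i := by
    rw [PiLp.inner_apply]; simp; exact Finset.sum_congr rfl fun i _ => mul_comm _ _
  have key : ∀ i, lam k i * v (k + 1) i ≥
      1 / (2 * η') * (lam (k + 1) i) ^ 2 - 1 / (2 * η') * (lam k i) ^ 2
        - η' * (v (k + 1) i) ^ 2 := by
    intro i
    have h := hrec k i
    have goal' : lam (k + 1) i ^ 2 ≤ lam k i ^ 2 + 2 * η' * (lam k i * v (k + 1) i)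
        + 2 * η' ^ 2 * (v (k + 1) i) ^ 2 := by
      rw [h]
      rcases max_cases (-η' * v (k + 1) i) (lam k i + η' * v (k + 1) i) with ⟨he, _⟩ | ⟨he, _⟩ <;>
        rw [he] <;>
        nlinarith [sq_nonneg (lam k i + η' * v (k + 1) i), sq_nonneg (v (k + 1) i)]
    have h1 : 1 / (2 * η') * lam (k + 1) i ^ 2 ≤
        1 / (2 * η') * (lam k i ^ 2 + 2 * η' * (lam k i * v (k + 1) i)
          + 2 * η' ^ 2 * (v (k + 1) i) ^ 2) :=
      mul_le_mul_of_nonneg_left goal' (by positivity)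
    have hexp : 1 / (2 * η') * (lam k i ^ 2 + 2 * η' * (lam k i * v (k + 1) i)
        + 2 * η' ^ 2 * (v (k + 1) i) ^ 2)
        = 1 / (2 * η') * lam k i ^ 2 + lam k i * v (k + 1) i + η' * (v (k + 1) i) ^ 2 := by
      field_simp
    linarith [h1, hexp.le, hexp.ge]
  rw [hinner, hnorm, hnorm, hnorm]
  calc ∑ i, lam k i * v (k + 1) i
      ≥ ∑ i, (1 / (2 * η') * (lam (k + 1) i) ^ 2 - 1 / (2 * η') * (lam k i) ^ 2
          - η' * (v (k + 1) i) ^ 2) := Finset.sum_le_sum fun i _ => key i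
    _ = _ := by
        simp only [Finset.sum_sub_distrib, Finset.mul_sum]
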